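/- For every positive integer n and every t ∈ [0,1], the function f(t) = √2·cos(2nπt) is an eigenfunction of the kernel k^τ(s,t) = min(s,t) − (11/10)(s+t) + 2(s²+t²) − (s³+t³) − 3(st²+ts²) + 2(st³+ts³) + (6/5)st + 2/15 with eigenvalue λ = 4n²π², in the sense that f(t) = λ · ∫_0^1 k^τ(s,t)·f(s) ds. (These are the odd-indexed eigenpairs j = 2n−1, λ_j^τ = (j+1)²π², of the Lemma.) -/

import Mathlib

open Real

/-- Antiderivative of `(a0 + a1 s + a2 s^2 + a3 s^3) * cos (c s)`. -/
noncomputable def cubicCosPrim (c a0 a1 a2 a3 s : ℝ) : ℝ :=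
  (a0 + a1*s + a2*s^2 + a3*s^3) * (Real.sin (c*s) / c)
  + (a1 + 2*a2*s + 3*a3*s^2) * (Real.cos (c*s) / c^2)
  - (2*a2 + 6*a3*s) * (Real.sin (c*s) / c^3)
  - (6*a3) * (Real.cos (c*s) / c^4)

lemma cubicCosPrim_hasDerivAt (c a0 a1 a2 a3 : ℝ) (hc : c ≠ 0) (s : ℝ) :
    HasDerivAt (fun s => cubicCosPrim c a0 a1 a2 a3 s)
      ((a0 + a1*s + a2*s^2 + a3*s^3) * Real.cos (c*s)) s := by
  have hid : HasDerivAt (fun x : ℝ => c * x) c s := by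
    simpa using (hasDerivAt_id s).const_mul c
  have hsin : HasDerivAt (fun x : ℝ => Real.sin (c*x)) (Real.cos (c*s) * c) s :=
    (Real.hasDerivAt_sin (c*s)).comp s hid
  have hcos : HasDerivAt (fun x : ℝ => Real.cos (c*x)) (-Real.sin (c*s) * c) s :=
    (Real.hasDerivAt_cos (c*s)).comp s hid
  have hp : HasDerivAt (fun x : ℝ => a0 + a1*x + a2*x^2 + a3*x^3)
      (a1 + 2*a2*s + 3*a3*s^2) s := by
    have := (((hasDerivAt_const s a0).add ((hasDerivAt_id s).const_mul a1)).add
      ((hasDerivAt_pow 2 s).const_mul a2)).add ((hasDerivAt_pow 3 s).const_mul a3)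
    exact this.congr_deriv (by ring)
  have hq : HasDerivAt (fun x : ℝ => a1 + 2*a2*x + 3*a3*x^2) (2*a2 + 6*a3*s) s := by
    have := ((hasDerivAt_const s a1).add ((hasDerivAt_id s).const_mul (2*a2))).add
      ((hasDerivAt_pow 2 s).const_mul (3*a3))
    exact this.congr_deriv (by ring)
  have hr : HasDerivAt (fun x : ℝ => 2*a2 + 6*a3*x) (6*a3) s := by
    have := (hasDerivAt_const s (2*a2)).add ((hasDerivAt_id s).const_mul (6*a3))
    exact this.congr_deriv (by ring)
  have h :=
    (((hp.mul (hsin.div_const c)).add (hq.mul (hcos.div_const (c^2)))).sub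
      (hr.mul (hsin.div_const (c^3)))).sub ((hasDerivAt_const s (6*a3)).mul
      (hcos.div_const (c^4)))
  exact h.congr_deriv (by field_simp; ring)

lemma cubicCos_integral (c a0 a1 a2 a3 x y : ℝ) (hc : c ≠ 0) :
    ∫ s in x..y, (a0 + a1*s + a2*s^2 + a3*s^3) * Real.cos (c*s) =
      cubicCosPrim c a0 a1 a2 a3 y - cubicCosPrim c a0 a1 a2 a3 x := by
  refine intervalIntegral.integral_eq_sub_of_hasDerivAt
    (fun s _ => cubicCosPrim_hasDerivAt c a0 a1 a2 a3 hc s) ?_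
  apply Continuous.intervalIntegrable
  fun_prop

theorem detrended_wiener_kernel_eigenfunction_cos (n : ℕ) (hn : 0 < n) (t : ℝ)
    (ht : t ∈ Set.Icc (0 : ℝ) 1) :
    Real.sqrt 2 * Real.cos (2 * (n : ℝ) * Real.pi * t) =
      4 * (n : ℝ) ^ 2 * Real.pi ^ 2 *
        ∫ s in (0 : ℝ)..1,
          (min s t - (11 / 10) * (s + t) + 2 * (s ^ 2 + t ^ 2) - (s ^ 3 + t ^ 3) -
              3 * (s * t ^ 2 + t * s ^ 2) + 2 * (s * t ^ 3 + t * s ^ 3) +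
              (6 / 5) * (s * t) + 2 / 15) *
            (Real.sqrt 2 * Real.cos (2 * (n : ℝ) * Real.pi * s)) := by
  obtain ⟨ht0, ht1⟩ := ht
  set c : ℝ := 2 * (n : ℝ) * Real.pi with hc_def
  have hn0 : (n : ℝ) ≠ 0 := Nat.cast_ne_zero.mpr hn.ne'
  have hc : c ≠ 0 := by
    simp only [hc_def]
    positivity
  have hsinc : Real.sin c = 0 := by
    have : c = (2 * n : ℕ) * Real.pi := by push_cast [hc_def]; ring
    rw [this, Real.sin_nat_mul_pi]
  have hcosc : Real.cos c = 1 := by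
    have : c = (n : ℕ) * (2 * Real.pi) := by push_cast [hc_def]; ring
    rw [this, Real.cos_nat_mul_two_pi]
  set K : ℝ → ℝ := fun s =>
    (min s t - (11 / 10) * (s + t) + 2 * (s ^ 2 + t ^ 2) - (s ^ 3 + t ^ 3) -
        3 * (s * t ^ 2 + t * s ^ 2) + 2 * (s * t ^ 3 + t * s ^ 3) +
        (6 / 5) * (s * t) + 2 / 15) * (Real.sqrt 2 * Real.cos (c * s)) with hK
  have hKcont : Continuous K := by
    apply Continuous.mul
    · fun_prop
    · fun_prop
  have hgoalK : (∫ s in (0:ℝ)..1,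
      (min s t - (11 / 10) * (s + t) + 2 * (s ^ 2 + t ^ 2) - (s ^ 3 + t ^ 3) -
          3 * (s * t ^ 2 + t * s ^ 2) + 2 * (s * t ^ 3 + t * s ^ 3) +
          (6 / 5) * (s * t) + 2 / 15) *
        (Real.sqrt 2 * Real.cos (2 * (n : ℝ) * Real.pi * s))) = ∫ s in (0:ℝ)..1, K s := by
    rfl
  rw [hgoalK]
  have hsplit : (∫ s in (0:ℝ)..t, K s) + ∫ s in t..1, K s = ∫ s in (0:ℝ)..1, K s :=
    intervalIntegral.integral_add_adjacent_intervals
      (hKcont.intervalIntegrable 0 t) (hKcont.intervalIntegrable t 1)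
  rw [← hsplit]
  have h1 : (∫ s in (0:ℝ)..t, K s) = ∫ s in (0:ℝ)..t,
      Real.sqrt 2 * (((-(11/10)*t + 2*t^2 - t^3 + 2/15) + (1 - 11/10 + (6/5)*t - 3*t^2 + 2*t^3)*s
        + (2 - 3*t)*s^2 + (-1 + 2*t)*s^3) * Real.cos (c * s)) := by
    apply intervalIntegral.integral_congr
    intro s hs
    rw [Set.uIcc_of_le ht0] at hs
    simp only [hK]
    rw [min_eq_left hs.2]
    ring
  have h2 : (∫ s in t..(1:ℝ), K s) = ∫ s in t..(1:ℝ),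
      Real.sqrt 2 * (((t - (11/10)*t + 2*t^2 - t^3 + 2/15) + (-11/10 + (6/5)*t - 3*t^2 + 2*t^3)*s
        + (2 - 3*t)*s^2 + (-1 + 2*t)*s^3) * Real.cos (c * s)) := by
    apply intervalIntegral.integral_congr
    intro s hs
    rw [Set.uIcc_of_le ht1] at hs
    simp only [hK]
    rw [min_eq_right hs.1]
    ring
  rw [h1, h2, intervalIntegral.integral_const_mul, intervalIntegral.integral_const_mul,
    cubicCos_integral _ _ _ _ _ _ _ hc, cubicCos_integral _ _ _ _ _ _ _ hc]
  simp only [cubicCosPrim, mul_zero, mul_one, Real.sin_zero, Real.cos_zero,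
    hsinc, hcosc]
  have hpi : Real.pi ≠ 0 := Real.pi_ne_zero
  rw [hc_def]
  field_simp
  ring
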